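/- For 1 ≤ k < n, the curvature quotient f_{n,k} is strictly elliptic on the positive cone: for every x ∈ Γⁿ and every index i, the partial derivative ∂f_{n,k}/∂x_i (x) is strictly positive. Explicitly, writing l = n-k and y_j = x_j⁻¹, one has ∂_i f_{n,k}(x) = (1/l) c_{n,k} σ_l(y)^{-1/l - 1} y_i² σ_{l-1}(y₁,…,ŷ_i,…,y_n), where the hat denotes omission of the i-th variable. -/

import Mathlib

/-- The `k`-th elementary symmetric polynomial in `n` real variables. -/
def esymm (n k : ℕ) (x : Fin n → ℝ) : ℝ :=
  ∑ s ∈ Finset.univ.powersetCard k, ∏ i ∈ s, x i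

/-- The curvature quotient `f_{n,k} = c_{n,k} (σ_n/σ_k)^{1/(n-k)}`,
with `c_{n,k} = C(n,k)^{1/(n-k)}`. -/
noncomputable def fnk (n k : ℕ) (x : Fin n → ℝ) : ℝ :=
  (n.choose k : ℝ) ^ ((1 : ℝ) / ((n : ℝ) - (k : ℝ))) *
    (esymm n n x / esymm n k x) ^ ((1 : ℝ) / ((n : ℝ) - (k : ℝ)))

lemma sum_powersetCard_insert_aux {α : Type*} [DecidableEq α] {x0 : α} {s : Finset α}
    (h : x0 ∉ s) (m : ℕ) (f : α → ℝ) :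
    ∑ t ∈ (insert x0 s).powersetCard (m + 1), ∏ j ∈ t, f j =
      (∑ t ∈ s.powersetCard (m + 1), ∏ j ∈ t, f j) +
        f x0 * ∑ t ∈ s.powersetCard m, ∏ j ∈ t, f j := by
  rw [Finset.powersetCard_succ_insert h, Finset.sum_union, Finset.sum_image, Finset.mul_sum]
  · congr 1
    refine Finset.sum_congr rfl fun t ht => ?_
    have hx0t : x0 ∉ t := fun hmem => h ((Finset.mem_powersetCard.1 ht).1 hmem)
    rw [Finset.prod_insert hx0t]
  · intro a ha b hb hab
    have ha' : x0 ∉ a := fun hmem => h ((Finset.mem_powersetCard.1 ha).1 hmem)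
    have hb' : x0 ∉ b := fun hmem => h ((Finset.mem_powersetCard.1 hb).1 hmem)
    rw [← Finset.erase_insert ha', ← Finset.erase_insert hb', hab]
  · rw [Finset.disjoint_right]
    intro t ht ht'
    simp only [Finset.mem_image] at ht
    obtain ⟨a, ha, rfl⟩ := ht
    exact h ((Finset.mem_powersetCard.1 ht').1 (Finset.mem_insert_self x0 a))

lemma sum_powersetCard_compl_aux {α : Type*} [DecidableEq α] (u : Finset α) (m : ℕ)
    (hm : m ≤ u.card) (f : α → ℝ) (hf : ∀ j ∈ u, f j ≠ 0) :
    ∑ t ∈ u.powersetCard m, ∏ j ∈ t, f j =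
      (∏ j ∈ u, f j) * ∑ t ∈ u.powersetCard (u.card - m), ∏ j ∈ t, (f j)⁻¹ := by
  rw [Finset.mul_sum]
  refine Finset.sum_nbij' (fun t => u \ t) (fun t => u \ t) ?_ ?_ ?_ ?_ ?_
  · intro t ht
    obtain ⟨hsub, hcard⟩ := Finset.mem_powersetCard.1 ht
    exact Finset.mem_powersetCard.2 ⟨Finset.sdiff_subset, by rw [Finset.card_sdiff_of_subset hsub, hcard]⟩
  · intro t ht
    obtain ⟨hsub, hcard⟩ := Finset.mem_powersetCard.1 ht
    refine Finset.mem_powersetCard.2 ⟨Finset.sdiff_subset, ?_⟩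
    rw [Finset.card_sdiff_of_subset hsub, hcard, Nat.sub_sub_self hm]
  · intro t ht
    exact Finset.sdiff_sdiff_eq_self (Finset.mem_powersetCard.1 ht).1
  · intro t ht
    exact Finset.sdiff_sdiff_eq_self (Finset.mem_powersetCard.1 ht).1
  · intro t ht
    obtain ⟨hsub, hcard⟩ := Finset.mem_powersetCard.1 ht
    have h1 : ∏ j ∈ u \ t, (f j)⁻¹ = (∏ j ∈ u \ t, f j)⁻¹ := by
      rw [Finset.prod_inv_distrib]
    have h2 : (∏ j ∈ u \ t, f j) * ∏ j ∈ t, f j = ∏ j ∈ u, f j := Finset.prod_sdiff hsub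
    have h3 : (∏ j ∈ u \ t, f j) ≠ 0 :=
      Finset.prod_ne_zero_iff.2 fun j hj => hf j (Finset.mem_sdiff.1 hj).1
    rw [h1, ← h2]
    field_simp

lemma esymm_update_eq (n m : ℕ) (hm : 1 ≤ m) (x : Fin n → ℝ) (i : Fin n) (s : ℝ) :
    esymm n m (Function.update x i s) =
      (∑ t ∈ (Finset.univ.erase i).powersetCard m, ∏ j ∈ t, x j) +
        s * ∑ t ∈ (Finset.univ.erase i).powersetCard (m - 1), ∏ j ∈ t, x j := by
  obtain ⟨m', rfl⟩ : ∃ m', m = m' + 1 := ⟨m - 1, (Nat.succ_pred_eq_of_pos hm).symm⟩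
  unfold esymm
  have huniv : (Finset.univ : Finset (Fin n)) = insert i (Finset.univ.erase i) :=
    (Finset.insert_erase (Finset.mem_univ i)).symm
  conv_lhs => rw [huniv]
  rw [sum_powersetCard_insert_aux (Finset.notMem_erase i _) m' (Function.update x i s)]
  have hupd : ∀ t : Finset (Fin n), t ⊆ Finset.univ.erase i →
      ∏ j ∈ t, Function.update x i s j = ∏ j ∈ t, x j := by
    intro t ht
    refine Finset.prod_congr rfl fun j hj => ?_
    exact Function.update_of_ne (Finset.ne_of_mem_erase (ht hj)) _ _
  rw [Function.update_self]
  simp only [Nat.add_sub_cancel]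
  congr 1
  · exact Finset.sum_congr rfl fun t ht => hupd t (Finset.mem_powersetCard.1 ht).1
  · congr 1
    exact Finset.sum_congr rfl fun t ht => hupd t (Finset.mem_powersetCard.1 ht).1

theorem fnk_strictly_elliptic (n k : ℕ) (hk1 : 1 ≤ k) (hkn : k < n)
    (x : Fin n → ℝ) (hx : ∀ i, 0 < x i) (i : Fin n) :
    HasDerivAt (fun s : ℝ => fnk n k (Function.update x i s))
        ((1 / ((n : ℝ) - (k : ℝ))) * (n.choose k : ℝ) ^ ((1 : ℝ) / ((n : ℝ) - (k : ℝ))) *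
          (esymm n (n - k) (fun j => (x j)⁻¹)) ^
            (-((1 : ℝ) / ((n : ℝ) - (k : ℝ))) - 1) *
          ((x i)⁻¹) ^ 2 *
          (∑ s ∈ (Finset.univ.erase i).powersetCard (n - k - 1), ∏ j ∈ s, (x j)⁻¹))
        (x i) ∧
      0 < (1 / ((n : ℝ) - (k : ℝ))) * (n.choose k : ℝ) ^ ((1 : ℝ) / ((n : ℝ) - (k : ℝ))) *
          (esymm n (n - k) (fun j => (x j)⁻¹)) ^
            (-((1 : ℝ) / ((n : ℝ) - (k : ℝ))) - 1) *
          ((x i)⁻¹) ^ 2 *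
          (∑ s ∈ (Finset.univ.erase i).powersetCard (n - k - 1), ∏ j ∈ s, (x j)⁻¹) := by
  have hn1 : 1 ≤ n := hk1.trans hkn.le
  have hxne : ∀ j, x j ≠ 0 := fun j => (hx j).ne'
  set r : ℝ := 1 / ((n : ℝ) - (k : ℝ)) with hr_def
  have hΔ : (0:ℝ) < (n : ℝ) - (k : ℝ) := sub_pos.2 (by exact_mod_cast hkn)
  have hr : 0 < r := by positivity
  set cnk : ℝ := (n.choose k : ℝ) ^ r with hcnk_def
  have hcnk : 0 < cnk := Real.rpow_pos_of_pos (by exact_mod_cast Nat.choose_pos hkn.le) r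
  set P : ℝ := ∏ j, x j with hP_def
  have hP : 0 < P := Finset.prod_pos fun j _ => hx j
  set Q : ℝ := ∏ j ∈ Finset.univ.erase i, x j with hQ_def
  set σl : ℝ := esymm n (n - k) (fun j => (x j)⁻¹) with hσl_def
  set E : ℝ := ∑ s ∈ (Finset.univ.erase i).powersetCard (n - k - 1), ∏ j ∈ s, (x j)⁻¹
    with hE_def
  set F : ℝ := ∑ s ∈ (Finset.univ.erase i).powersetCard (n - k), ∏ j ∈ s, (x j)⁻¹ with hF_def
  set A : ℝ := ∑ t ∈ (Finset.univ.erase i).powersetCard k, ∏ j ∈ t, x j with hA_def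
  set B : ℝ := ∑ t ∈ (Finset.univ.erase i).powersetCard (k - 1), ∏ j ∈ t, x j with hB_def
  have hcard_univ : (Finset.univ : Finset (Fin n)).card = n := by simp
  have hcard_erase : (Finset.univ.erase i).card = n - 1 := by
    rw [Finset.card_erase_of_mem (Finset.mem_univ i), hcard_univ]
  have hps_univ : (Finset.univ : Finset (Fin n)).powersetCard n = {Finset.univ} := by
    have h := Finset.powersetCard_self (Finset.univ : Finset (Fin n))
    rwa [hcard_univ] at h
  have hps_erase : (Finset.univ.erase i).powersetCard (n - 1) = {Finset.univ.erase i} := by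
    have h := Finset.powersetCard_self (Finset.univ.erase i)
    rwa [hcard_erase] at h
  -- basic identities
  have hQP : Q * x i = P := Finset.prod_erase_mul _ _ (Finset.mem_univ i)
  have hQ' : Q = P * (x i)⁻¹ := by
    rw [← hQP, mul_assoc, mul_inv_cancel₀ (hxne i), mul_one]
  have hnn : esymm n n x = P := by
    unfold esymm
    rw [hps_univ, Finset.sum_singleton]
  have hn_fun : (fun s : ℝ => esymm n n (Function.update x i s)) = fun s => s * Q := by
    funext s
    rw [esymm_update_eq n n hn1 x i s]
    have h1 : (Finset.univ.erase i).powersetCard n = ∅ :=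
      Finset.powersetCard_eq_empty.2 (by rw [hcard_erase]; omega)
    rw [h1, hps_erase, Finset.sum_empty, Finset.sum_singleton, zero_add]
  have hk_fun : (fun s : ℝ => esymm n k (Function.update x i s)) = fun s => A + s * B := by
    funext s
    rw [esymm_update_eq n k hk1 x i s]
  -- complement identities
  have hσk : esymm n k x = P * σl := by
    rw [hσl_def]
    unfold esymm
    have h := sum_powersetCard_compl_aux (Finset.univ : Finset (Fin n)) k
      (by rw [hcard_univ]; exact hkn.le) x (fun j _ => hxne j)
    rwa [hcard_univ] at h
  have hBF : B = (P * (x i)⁻¹) * F := by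
    rw [hB_def, hF_def, ← hQ']
    have h := sum_powersetCard_compl_aux (Finset.univ.erase i) (k - 1)
      (by rw [hcard_erase]; omega) x (fun j _ => hxne j)
    rw [hcard_erase] at h
    have hidx : n - 1 - (k - 1) = n - k := by omega
    rwa [hidx] at h
  have hσlF : σl = F + (x i)⁻¹ * E := by
    rw [hσl_def]
    unfold esymm
    have huniv : (Finset.univ : Finset (Fin n)) = insert i (Finset.univ.erase i) :=
      (Finset.insert_erase (Finset.mem_univ i)).symm
    have hsucc : n - k = (n - k - 1) + 1 := by omega
    have key := sum_powersetCard_insert_aux (Finset.notMem_erase i Finset.univ)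
      (n - k - 1) (fun j => (x j)⁻¹)
    rw [← hsucc, ← huniv] at key
    exact key
  -- positivity
  have hσl : 0 < σl := by
    rw [hσl_def]; unfold esymm
    refine Finset.sum_pos
      (fun t _ => Finset.prod_pos fun j _ => inv_pos.2 (hx j)) ?_
    exact Finset.powersetCard_nonempty.2 (by rw [hcard_univ]; omega)
  have hE : 0 < E := by
    rw [hE_def]
    refine Finset.sum_pos
      (fun t _ => Finset.prod_pos fun j _ => inv_pos.2 (hx j)) ?_
    exact Finset.powersetCard_nonempty.2 (by rw [hcard_erase]; omega)
  have hgk0 : esymm n k x ≠ 0 := by rw [hσk]; exact (mul_pos hP hσl).ne'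
  -- derivatives
  have hh : HasDerivAt (fun s : ℝ => esymm n n (Function.update x i s)) Q (x i) := by
    rw [hn_fun]; simpa using (hasDerivAt_id (x i)).mul_const Q
  have hg : HasDerivAt (fun s : ℝ => esymm n k (Function.update x i s)) B (x i) := by
    rw [hk_fun]; simpa using ((hasDerivAt_id (x i)).mul_const B).const_add A
  have hne' : esymm n k (Function.update x i (x i)) ≠ 0 := by
    rw [Function.update_eq_self]; exact hgk0
  have hdiv := hh.div hg hne'
  simp only [Function.update_eq_self] at hdiv
  have hratpos : 0 < esymm n n x / esymm n k x := by
    rw [hnn, hσk]; positivity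
  have hrpow := hdiv.rpow_const (p := r) (Or.inl (by simpa using hratpos.ne'))
  simp only [Pi.div_apply, Function.update_eq_self] at hrpow
  have hmul := hrpow.const_mul cnk
  constructor
  · unfold fnk
    rw [← hr_def, ← hcnk_def]
    refine hmul.congr_deriv ?_
    symm
    rw [hnn, hσk, hQ', hBF]
    have hFE : F = σl - (x i)⁻¹ * E := by linarith
    rw [hFE]
    have hrat : P / (P * σl) = σl⁻¹ := by
      field_simp
    rw [hrat]
    have hinv : (σl⁻¹) ^ (r - 1) = σl ^ (1 - r) := by
      rw [Real.inv_rpow hσl.le, ← Real.rpow_neg hσl.le, neg_sub]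
    rw [hinv]
    have hpow : σl ^ (-r - 1) = σl ^ (1 - r) / σl ^ 2 := by
      rw [← Real.rpow_natCast σl 2, ← Real.rpow_sub hσl]
      congr 1
      push_cast
      ring
    rw [hpow, inv_pow]
    field_simp [hσl.ne', hP.ne', hxne i]
    ring
  · have hw : (0:ℝ) < ((x i)⁻¹) ^ 2 := pow_pos (inv_pos.2 (hx i)) 2
    have hσp : 0 < σl ^ (-r - 1) := Real.rpow_pos_of_pos hσl _
    exact mul_pos (mul_pos (mul_pos (mul_pos hr hcnk) hσp) hw) hE
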